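/- Let k ≥ 1 and ℓ ≥ 2, and let f(k,h) be any function such that every digraph with minimum out-degree ≥ f(k,h) contains S⁻_{k,h} as a subgraph. Then every digraph G with δ⁺(G) ≥ f(k, 3kℓ^{k+1}) + 2kℓ^k contains T(k,ℓ) as a subgraph. -/

import Mathlib

open Finset

attribute [local instance] Classical.propDecidable
set_option linter.unusedSectionVars false
set_option linter.unusedVariables false

/-- Finset of lists over `Fin ℓ` of length at most `j`. -/
def allLists (ℓ : ℕ) : ℕ → Finset (List (Fin ℓ))
  | 0 => {[]}
  | j+1 => insert [] ((allLists ℓ j).biUnion fun l =>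
      (Finset.univ : Finset (Fin ℓ)).image (fun a => a :: l))

lemma mem_allLists (ℓ : ℕ) : ∀ (j : ℕ) (l : List (Fin ℓ)), l ∈ allLists ℓ j ↔ l.length ≤ j := by
  intro j
  induction j with
  | zero =>
    intro l
    simp [allLists, List.length_eq_zero_iff, Nat.le_zero]
  | succ j ih =>
    intro l
    cases l with
    | nil => simp [allLists]
    | cons a t =>
      simp only [allLists, Finset.mem_insert, Finset.mem_biUnion, Finset.mem_image,
        Finset.mem_univ, true_and]
      constructor
      · rintro (h | ⟨t', ht', a', hh⟩)
        · exact absurd h (by simp)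
        · injection hh with h1 h2
          subst h2
          simpa using (ih t').1 ht'
      · intro h
        right
        exact ⟨t, (ih t).2 (by simpa using h), a, rfl⟩

lemma card_allLists_succ (ℓ j : ℕ) :
    (allLists ℓ (j+1)).card = ℓ * (allLists ℓ j).card + 1 := by
  have hnil : ([] : List (Fin ℓ)) ∉ (allLists ℓ j).biUnion (fun l =>
      (Finset.univ : Finset (Fin ℓ)).image (fun a => a :: l)) := by
    simp
  have hcard : ((allLists ℓ j).biUnion (fun l =>
      (Finset.univ : Finset (Fin ℓ)).image (fun a => a :: l))).card
      = ℓ * (allLists ℓ j).card := by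
    rw [Finset.card_biUnion]
    · have : ∀ l ∈ allLists ℓ j,
          ((Finset.univ : Finset (Fin ℓ)).image (fun a => a :: l)).card = ℓ := by
        intro l _
        rw [Finset.card_image_of_injective _ (fun a b h => by injection h)]
        simp
      rw [Finset.sum_congr rfl this]
      simp [Nat.mul_comm]
    · intro x hx y hy hxy
      simp only [Finset.disjoint_left, Finset.mem_image, Finset.mem_univ, true_and]
      rintro z ⟨a, rfl⟩ ⟨b, hb⟩
      apply hxy
      injection hb with h1 h2
      exact h2.symm
  rw [allLists, Finset.card_insert_of_notMem hnil, hcard]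

lemma card_allLists_le (ℓ j : ℕ) (hℓ : 2 ≤ ℓ) : (allLists ℓ j).card + 1 ≤ 2 * ℓ ^ j := by
  induction j with
  | zero =>
    simp only [allLists, Finset.card_singleton, pow_zero, mul_one]
    omega
  | succ j ih =>
    rw [card_allLists_succ]
    have h1 : 2 * ℓ ^ (j+1) = ℓ * (2 * ℓ ^ j) := by ring
    have h2 : ℓ * ((allLists ℓ j).card + 1) ≤ ℓ * (2 * ℓ ^ j) :=
      Nat.mul_le_mul_left ℓ ih
    have : ℓ * (allLists ℓ j).card + ℓ ≤ ℓ * (2 * ℓ ^ j) := by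
      calc ℓ * (allLists ℓ j).card + ℓ = ℓ * ((allLists ℓ j).card + 1) := by ring
      _ ≤ _ := h2
    omega

lemma geom_allLists (ℓ j : ℕ) (hℓ : 1 ≤ ℓ) :
    (ℓ - 1) * (allLists ℓ j).card + 1 = ℓ ^ (j + 1) := by
  obtain ⟨s, rfl⟩ : ∃ s, ℓ = s + 1 := ⟨ℓ - 1, by omega⟩
  induction j with
  | zero => simp [allLists]
  | succ j ih =>
    rw [card_allLists_succ]
    have hih : s * (allLists (s+1) j).card + 1 = (s + 1) ^ (j + 1) := by simpa using ih
    have : (s + 1 - 1) * ((s+1) * (allLists (s+1) j).card + 1) + 1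
        = (s+1) * (s * (allLists (s+1) j).card + 1) := by
      simp only [Nat.add_sub_cancel]
      ring
    rw [this, hih]
    ring

/-- Number of lists of length exactly `j` is at most `ℓ^j`. -/
lemma card_exact_le (ℓ : ℕ) : ∀ j : ℕ,
    ((allLists ℓ j).filter (fun l => l.length = j)).card ≤ ℓ ^ j := by
  intro j
  induction j with
  | zero =>
    apply le_trans (Finset.card_filter_le _ _)
    simp [allLists]
  | succ j ih =>
    have hsub : (allLists ℓ (j+1)).filter (fun l => l.length = j+1) ⊆
        ((allLists ℓ j).filter (fun l => l.length = j)).biUnion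
          (fun t => (Finset.univ : Finset (Fin ℓ)).image (fun a => a :: t)) := by
      intro l hl
      rw [Finset.mem_filter] at hl
      obtain ⟨hmem, hlen⟩ := hl
      cases l with
      | nil => simp at hlen
      | cons a t =>
        simp only [Finset.mem_biUnion, Finset.mem_filter, Finset.mem_image, Finset.mem_univ,
          true_and]
        refine ⟨t, ⟨(mem_allLists ℓ j t).2 ?_, ?_⟩, a, rfl⟩
        · simp at hlen; omega
        · simp at hlen; omega
    calc ((allLists ℓ (j+1)).filter (fun l => l.length = j+1)).card
        ≤ _ := Finset.card_le_card hsub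
      _ ≤ ∑ t ∈ (allLists ℓ j).filter (fun l => l.length = j),
            ((Finset.univ : Finset (Fin ℓ)).image (fun a => a :: t)).card :=
          Finset.card_biUnion_le
      _ ≤ ∑ t ∈ (allLists ℓ j).filter (fun l => l.length = j), ℓ := by
          apply Finset.sum_le_sum
          intro t _
          apply le_trans (Finset.card_image_le)
          simp
      _ ≤ ℓ ^ j * ℓ := by
          rw [Finset.sum_const, smul_eq_mul]
          exact Nat.mul_le_mul_right ℓ ih
      _ = ℓ ^ (j+1) := by ring

def beta (ℓ k j : ℕ) : ℕ := ∑ i ∈ Finset.Ico j k, ((ℓ - 1) * (allLists ℓ i).card + 1)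

def rr (ℓ k j : ℕ) : ℕ := ∑ i ∈ Finset.range j, (beta ℓ k i + 1)

lemma beta_succ (ℓ k j : ℕ) (h : j < k) :
    beta ℓ k j = ((ℓ - 1) * (allLists ℓ j).card + 1) + beta ℓ k (j+1) :=
  Finset.sum_eq_sum_Ico_succ_bot h _

lemma gsum_le (ℓ : ℕ) (hℓ : 2 ≤ ℓ) : ∀ K : ℕ, (∑ i ∈ Finset.range K, ℓ ^ (i+1)) + 1 ≤ 2 * ℓ ^ K := by
  intro K
  induction K with
  | zero => simp
  | succ K ih =>
    rw [Finset.sum_range_succ]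
    have h2 : 2 * ℓ ^ K ≤ ℓ ^ (K+1) := by
      rw [pow_succ]
      calc 2 * ℓ ^ K = ℓ ^ K * 2 := Nat.mul_comm _ _
        _ ≤ ℓ ^ K * ℓ := Nat.mul_le_mul_left _ hℓ
    omega

lemma beta_add_one_le (ℓ k j : ℕ) (hℓ : 2 ≤ ℓ) : beta ℓ k j + 1 ≤ 2 * ℓ ^ k := by
  have h0 : beta ℓ k j ≤ beta ℓ k 0 := by
    apply Finset.sum_le_sum_of_subset
    apply Finset.Ico_subset_Ico (Nat.zero_le _) le_rfl
  have : beta ℓ k 0 = ∑ i ∈ Finset.range k, ℓ ^ (i+1) := by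
    rw [beta, ← Finset.range_eq_Ico]
    exact Finset.sum_congr rfl (fun i _ => geom_allLists ℓ i (by omega))
  have := gsum_le ℓ hℓ k
  omega

lemma rr_succ (ℓ k j : ℕ) : rr ℓ k (j+1) = rr ℓ k j + (beta ℓ k j + 1) :=
  Finset.sum_range_succ _ _

lemma rr_le (ℓ k : ℕ) (hℓ : 2 ≤ ℓ) : rr ℓ k k ≤ 2 * k * ℓ ^ k := by
  calc rr ℓ k k ≤ ∑ _i ∈ Finset.range k, 2 * ℓ ^ k :=
        Finset.sum_le_sum (fun i _ => beta_add_one_le ℓ k i hℓ)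
    _ = k * (2 * ℓ ^ k) := by rw [Finset.sum_const, Finset.card_range, smul_eq_mul]
    _ = 2 * k * ℓ ^ k := by ring

lemma arith_final (k ℓ : ℕ) (hk : 1 ≤ k) (hℓ : 2 ≤ ℓ) :
    2 * ℓ ^ k + ℓ ≤ 2 * k * ℓ ^ (k+1) := by
  have h1 : ℓ ≤ ℓ ^ k := Nat.le_self_pow (by omega) ℓ
  have h2 : 2 * ℓ ^ (k+1) ≤ 2 * k * ℓ ^ (k+1) := by
    have h : 1 * ℓ ^ (k+1) ≤ k * ℓ ^ (k+1) := Nat.mul_le_mul_right _ hk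
    have : 2 * k * ℓ ^ (k+1) = 2 * (k * ℓ ^ (k+1)) := by ring
    omega
  have h3 : 4 * ℓ ^ k ≤ 2 * ℓ ^ (k+1) := by
    rw [pow_succ]
    calc 4 * ℓ ^ k = 2 * (ℓ ^ k * 2) := by ring
      _ ≤ 2 * (ℓ ^ k * ℓ) := by
          exact Nat.mul_le_mul_left _ (Nat.mul_le_mul_left _ hℓ)
  omega




/-- Out-degree of a vertex in a digraph given by a relation. -/
noncomputable def outDeg {V : Type*} (G : V → V → Prop) (v : V) : ℕ := Nat.card {u : V // G v u}

/-- In-degree of a vertex in a digraph given by a relation. -/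
noncomputable def inDeg {V : Type*} (G : V → V → Prop) (v : V) : ℕ := Nat.card {u : V // G u v}

/-- A digraph has no loops. -/
def Loopless {V : Type*} (G : V → V → Prop) : Prop := ∀ v, ¬ G v v
/-- `T` is contained in `G` as a subgraph. -/
def ContainsSub {V W : Type*} (T : V → V → Prop) (G : W → W → Prop) : Prop :=
  ∃ φ : V → W, Function.Injective φ ∧ ∀ u v, T u v → G (φ u) (φ v)
/-- Vertices of `S⁻_{k,h}`, the `(k-1)`-subdivision of the in-star with `h` leaves:
a centre together with, for each of the `h` rays, `k` vertices indexed by their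
distance minus one from the centre. -/
def SpiderVert (k h : ℕ) : Type := Unit ⊕ Fin h × Fin k

/-- The edge relation of `S⁻_{k,h}`: each ray is a directed path of length `k`
into the centre. -/
def SpiderAdj (k h : ℕ) : SpiderVert k h → SpiderVert k h → Prop
  | Sum.inr (r, p), Sum.inr (r', p') => r = r' ∧ (p : ℕ) = (p' : ℕ) + 1
  | Sum.inr (_, p), Sum.inl _ => (p : ℕ) = 0
  | _, _ => False
/-- Vertices of `T(k,ℓ)`: the complete `ℓ`-ary out-arborescence of depth `k`
(vertices: lists over `Fin ℓ` of length at most `k`) together with, for each leaf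
(list of length `k`), `ℓ` rays of `k` internal vertices each, indexed by their
distance minus one from the centre. -/
def TVert (k ℓ : ℕ) : Type :=
  {l : List (Fin ℓ) // l.length ≤ k} ⊕ ({l : List (Fin ℓ) // l.length = k} × Fin ℓ × Fin k)

/-- The edge relation of `T(k,ℓ)`: `B⁺_{k,ℓ}` with each leaf identified with the centre
of a new copy of `S⁻_{k,ℓ}` (rays directed towards the centre). -/
def TAdj (k ℓ : ℕ) : TVert k ℓ → TVert k ℓ → Prop
  | Sum.inl u, Sum.inl v => ∃ a : Fin ℓ, (v : List (Fin ℓ)) = u.1 ++ [a]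
  | Sum.inr (l, r, p), Sum.inr (l', r', p') => l = l' ∧ r = r' ∧ (p : ℕ) = (p' : ℕ) + 1
  | Sum.inr (l, _, p), Sum.inl v => (p : ℕ) = 0 ∧ (v : List (Fin ℓ)) = l.1
  | Sum.inl _, Sum.inr _ => False

section S
variable {W : Type} [Fintype W] (G : W → W → Prop)

/-- out-degree within a finset. -/
noncomputable def odeg (X : Finset W) (v : W) : ℕ := (X.filter (fun u => G v u)).card

lemma outDeg_eq_odeg (v : W) : outDeg G v = odeg G Finset.univ v := by
  rw [outDeg, Nat.card_eq_fintype_card, odeg]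
  rw [Fintype.card_subtype]

lemma outDeg_restrict (X : Finset W) (v : {x // x ∈ X}) :
    outDeg (fun a b : {x // x ∈ X} => G a.1 b.1) v = odeg G X v.1 := by
  rw [outDeg, Nat.card_eq_fintype_card, odeg]
  have e : {u : {x // x ∈ X} // G v.1 u.1} ≃ {u : W // u ∈ X.filter (fun x => G v.1 x)} :=
    { toFun := fun u => ⟨u.1.1, Finset.mem_filter.2 ⟨u.1.2, u.2⟩⟩
      invFun := fun u => ⟨⟨u.1, (Finset.mem_filter.1 u.2).1⟩, (Finset.mem_filter.1 u.2).2⟩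
      left_inv := fun u => rfl
      right_inv := fun u => rfl }
  rw [Fintype.card_congr e, Fintype.card_coe]

/-- `c` is the centre of a copy of `S⁻_{k,H}` inside `X`. -/
def IsCentre (k H : ℕ) (X : Finset W) (c : W) : Prop :=
  c ∈ X ∧ ∃ leg : Fin H → Fin k → W,
    (∀ r p, leg r p ∈ X) ∧
    (Function.Injective fun rp : Fin H × Fin k => leg rp.1 rp.2) ∧
    (∀ r p, leg r p ≠ c) ∧
    (∀ r (p : Fin k), (p : ℕ) = 0 → G (leg r p) c) ∧
    (∀ r (p p' : Fin k), (p : ℕ) = (p' : ℕ) + 1 → G (leg r p) (leg r p'))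

lemma IsCentre.mono {k H : ℕ} {X X' : Finset W} (hXX : X ⊆ X') {c : W}
    (h : IsCentre G k H X c) : IsCentre G k H X' c := by
  obtain ⟨hc, leg, h1, h2, h3, h4, h5⟩ := h
  exact ⟨hXX hc, leg, fun r p => hXX (h1 r p), h2, h3, h4, h5⟩

lemma exists_centre (k H : ℕ) (X : Finset W) (hne : X.Nonempty)
    (hsub : ContainsSub (SpiderAdj k H) (fun a b : {x // x ∈ X} => G a.1 b.1)) :
    ∃ c, IsCentre G k H X c := by
  obtain ⟨φ, hinj, hadj⟩ := hsub
  refine ⟨(φ (Sum.inl ())).1, (φ (Sum.inl ())).2, fun r p => (φ (Sum.inr (r, p))).1,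
    fun r p => (φ (Sum.inr (r, p))).2, ?_, ?_, ?_, ?_⟩
  · intro rp rp' h
    have h2 : φ (Sum.inr rp) = φ (Sum.inr rp') := Subtype.ext h
    exact Sum.inr_injective (hinj h2)
  · intro r p h
    have : Sum.inr (r, p) = (Sum.inl () : SpiderVert k H) := hinj (Subtype.ext h)
    exact absurd this (by simp)
  · intro r p hp
    exact hadj (Sum.inr (r, p)) (Sum.inl ()) hp
  · intro r p p' hp
    exact hadj (Sum.inr (r, p)) (Sum.inr (r, p')) ⟨rfl, hp⟩


/-- `v` is the root of a depth-`j` good skeleton in `X`, robust to forbidden sets of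
size `beta ℓ k j`. -/
def GoodV (k ℓ H j : ℕ) (X : Finset W) (v : W) : Prop :=
  v ∈ X ∧ ∀ F : Finset W, F.card ≤ beta ℓ k j → v ∉ F →
    ∃ ψ : List (Fin ℓ) → W,
      ψ [] = v ∧
      (∀ l ∈ allLists ℓ j, ψ l ∈ X ∧ ψ l ∉ F) ∧
      Set.InjOn ψ ↑(allLists ℓ j) ∧
      (∀ (l : List (Fin ℓ)) (a : Fin ℓ), l.length < j → G (ψ l) (ψ (l ++ [a]))) ∧
      (∀ l ∈ allLists ℓ j, l.length = j → IsCentre G k H X (ψ l))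

lemma GoodV.mono {k ℓ H j : ℕ} {X X' : Finset W} (hXX : X ⊆ X') {v : W}
    (h : GoodV G k ℓ H j X v) : GoodV G k ℓ H j X' v := by
  obtain ⟨hv, h⟩ := h
  refine ⟨hXX hv, fun F hF hvF => ?_⟩
  obtain ⟨ψ, h1, h2, h3, h4, h5⟩ := h F hF hvF
  exact ⟨ψ, h1, fun l hl => ⟨hXX (h2 l hl).1, (h2 l hl).2⟩, h3, h4,
    fun l hl hll => IsCentre.mono G hXX (h5 l hl hll)⟩

/-- Choosing `ℓ` rays of a spider avoiding a small forbidden set. -/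
lemma choose_rays {k H ℓ : ℕ} (hk : 1 ≤ k) (leg : Fin H → Fin k → W)
    (hinj : Function.Injective fun rp : Fin H × Fin k => leg rp.1 rp.2)
    (U : Finset W) (hcard : U.card + ℓ ≤ H) :
    ∃ e : Fin ℓ → Fin H, Function.Injective e ∧ ∀ i p, leg (e i) p ∉ U := by
  set Bad : Finset (Fin H) := Finset.univ.filter (fun r => ∃ p, leg r p ∈ U) with hBad
  have hBadcard : Bad.card ≤ U.card := by
    have hex : ∀ r ∈ Bad, ∃ p, leg r p ∈ U := by
      intro r hr
      simpa [hBad] using hr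
    choose pick hpick using hex
    have hz : (0 : ℕ) < k := hk
    apply Finset.card_le_card_of_injOn
      (fun r => if h : r ∈ Bad then leg r (pick r h) else leg r ⟨0, hz⟩)
    · intro r hr
      show (if h : r ∈ Bad then leg r (pick r h) else leg r ⟨0, hz⟩) ∈ U
      rw [dif_pos (by simpa using hr)]
      exact hpick r hr
    · intro r hr r' hr' heq
      simp only [Finset.mem_coe] at hr hr'
      simp only [hr, hr', dif_pos] at heq
      have h2 : (fun rp : Fin H × Fin k => leg rp.1 rp.2) (r, pick r hr)
          = (fun rp : Fin H × Fin k => leg rp.1 rp.2) (r', pick r' hr') := heq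
      have := hinj h2
      exact congrArg Prod.fst this
  have hGood : ℓ ≤ (Finset.univ \ Bad).card := by
    have := Finset.card_sdiff_of_subset (Finset.subset_univ Bad)
    have hH : (Finset.univ : Finset (Fin H)).card = H := by simp
    omega
  obtain ⟨t, hts, htcard⟩ := Finset.exists_subset_card_eq hGood
  refine ⟨fun i => (t.orderIsoOfFin htcard i).1, ?_, ?_⟩
  · intro i i' h
    have := Subtype.ext h
    exact (t.orderIsoOfFin htcard).injective this
  · intro i p hmem
    have hmm : ((t.orderIsoOfFin htcard i) : Fin H) ∈ t := (t.orderIsoOfFin htcard i).2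
    have := hts hmm
    rw [Finset.mem_sdiff] at this
    exact this.2 (by simp only [hBad, Finset.mem_filter, Finset.mem_univ, true_and]; exact ⟨p, hmem⟩)

lemma main_lemma (k ℓ H m : ℕ) (hk : 1 ≤ k) (hℓ : 2 ≤ ℓ)
    (hcent : ∀ X : Finset W, X.Nonempty → (∀ v ∈ X, m ≤ odeg G X v) →
      ∃ c, IsCentre G k H X c) :
    ∀ j, j ≤ k → ∀ X : Finset W, X.Nonempty → (∀ v ∈ X, m + rr ℓ k j ≤ odeg G X v) →
      ∃ v, GoodV G k ℓ H j X v := by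
  intro j
  induction j with
  | zero =>
    intro _ X hne hdeg
    have hdeg' : ∀ v ∈ X, m ≤ odeg G X v := by
      intro v hv
      have := hdeg v hv
      simp only [rr, Finset.range_zero, Finset.sum_empty, Nat.add_zero] at this
      exact this
    obtain ⟨c, hc⟩ := hcent X hne hdeg'
    refine ⟨c, hc.1, ?_⟩
    intro F hF hcF
    have hmem0 : ∀ l : List (Fin ℓ), l ∈ allLists ℓ 0 → l = [] := by
      intro l hl
      have := (mem_allLists ℓ 0 l).1 hl
      exact List.length_eq_zero_iff.1 (Nat.le_zero.1 this)
    refine ⟨fun _ => c, rfl, ?_, ?_, ?_, ?_⟩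
    · intro l hl
      exact ⟨hc.1, hcF⟩
    · intro l1 h1 l2 h2 _
      rw [hmem0 l1 (Finset.mem_coe.1 h1), hmem0 l2 (Finset.mem_coe.1 h2)]
    · intro l a hlen
      omega
    · intro l hl hlen
      exact hc
  | succ j ih =>
    intro hjk X hne hdeg
    have hjklt : j < k := hjk
    by_cases hcase : ∃ v ∈ X, beta ℓ k j + 1 ≤
        (X.filter (fun u => G v u ∧ GoodV G k ℓ H j X u)).card
    · -- a vertex with many good out-neighbours: build the next level
      obtain ⟨v, hvX, hvcard⟩ := hcase
      refine ⟨v, hvX, ?_⟩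
      intro F hF hvF
      have grow : ∀ i : ℕ, i ≤ ℓ → ∃ (u : ℕ → W) (ψ : ℕ → List (Fin ℓ) → W),
          (∀ a, a < i → G v (u a)) ∧ (∀ a, a < i → ψ a [] = u a) ∧
          (∀ a, a < i → ∀ l ∈ allLists ℓ j, ψ a l ∈ X ∧ ψ a l ∉ F ∧ ψ a l ≠ v) ∧
          (∀ a, a < i → Set.InjOn (ψ a) ↑(allLists ℓ j)) ∧
          (∀ a, a < i → ∀ (l : List (Fin ℓ)) (b : Fin ℓ), l.length < j →
            G (ψ a l) (ψ a (l ++ [b]))) ∧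
          (∀ a, a < i → ∀ l ∈ allLists ℓ j, l.length = j → IsCentre G k H X (ψ a l)) ∧
          (∀ a, a < i → ∀ a', a' < i → a ≠ a' → ∀ l ∈ allLists ℓ j, ∀ l' ∈ allLists ℓ j,
            ψ a l ≠ ψ a' l') := by
        intro i
        induction i with
        | zero =>
          intro _
          exact ⟨fun _ => v, fun _ _ => v, by omega, by omega, by omega, by omega,
            by omega, by omega, by omega⟩
        | succ i ihg =>
          intro hi
          obtain ⟨u, ψ, p1, p2, p3, p4, p5, p6, p7⟩ := ihg (by omega)
          set F' : Finset W := (F ∪ {v}) ∪ (Finset.range i).biUnion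
            (fun a => (allLists ℓ j).image (ψ a)) with hF'def
          have hFsub : F ⊆ F' := by
            intro x hx
            simp only [hF'def, Finset.mem_union, Finset.mem_singleton]
            exact Or.inl (Or.inl hx)
          have hvF' : v ∈ F' := by
            simp [hF'def]
          have himg : ∀ a, a < i → ∀ l ∈ allLists ℓ j, ψ a l ∈ F' := by
            intro a ha l hl
            simp only [hF'def, Finset.mem_union, Finset.mem_biUnion, Finset.mem_range]
            exact Or.inr ⟨a, ha, Finset.mem_image_of_mem _ hl⟩
          have hF'card : F'.card ≤ beta ℓ k j := by
            have h1 : F'.card ≤ (F ∪ {v}).card +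
                ((Finset.range i).biUnion (fun a => (allLists ℓ j).image (ψ a))).card :=
              Finset.card_union_le _ _
            have h2 : (F ∪ {v}).card ≤ F.card + 1 := by
              apply le_trans (Finset.card_union_le _ _)
              simp
            have h3 : ((Finset.range i).biUnion
                (fun a => (allLists ℓ j).image (ψ a))).card ≤ i * (allLists ℓ j).card := by
              apply le_trans Finset.card_biUnion_le
              calc ∑ a ∈ Finset.range i, ((allLists ℓ j).image (ψ a)).card
                  ≤ ∑ _a ∈ Finset.range i, (allLists ℓ j).card :=
                    Finset.sum_le_sum (fun a _ => Finset.card_image_le)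
                _ = i * (allLists ℓ j).card := by
                    rw [Finset.sum_const, Finset.card_range, smul_eq_mul]
            have h4 : i * (allLists ℓ j).card ≤ (ℓ - 1) * (allLists ℓ j).card :=
              Nat.mul_le_mul_right _ (by omega)
            have h5 := beta_succ ℓ k j hjklt
            omega
          -- pick a fresh good out-neighbour
          set A : Finset W := X.filter (fun u => G v u ∧ GoodV G k ℓ H j X u) with hAdef
          have hAF' : ∃ x ∈ A, x ∉ F' := by
            by_contra hcon
            push_neg at hcon
            have hsub : A ⊆ F' := fun x hx => hcon x hx
            have := Finset.card_le_card hsub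
            omega
          obtain ⟨unew, hunewA, hunewF'⟩ := hAF'
          rw [hAdef, Finset.mem_filter] at hunewA
          obtain ⟨hunewX, hGvu, hgood⟩ := hunewA
          obtain ⟨ψnew, hn1, hn2, hn3, hn4, hn5⟩ := hgood.2 F' hF'card hunewF'
          refine ⟨Function.update u i unew, Function.update ψ i ψnew,
            ?_, ?_, ?_, ?_, ?_, ?_, ?_⟩
          · intro a ha
            by_cases h : a = i
            · rw [h, Function.update_self]; exact hGvu
            · rw [Function.update_of_ne h]; exact p1 a (by omega)
          · intro a ha
            by_cases h : a = i
            · rw [h, Function.update_self, Function.update_self]; exact hn1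
            · rw [Function.update_of_ne h, Function.update_of_ne h]; exact p2 a (by omega)
          · intro a ha l hl
            by_cases h : a = i
            · rw [h, Function.update_self]
              refine ⟨(hn2 l hl).1, fun hmem => (hn2 l hl).2 (hFsub hmem), fun heq =>
                (hn2 l hl).2 (heq ▸ hvF')⟩
            · rw [Function.update_of_ne h]; exact (p3 a (by omega) l hl)
          · intro a ha
            by_cases h : a = i
            · rw [h, Function.update_self]; exact hn3
            · rw [Function.update_of_ne h]; exact p4 a (by omega)
          · intro a ha l b hlen
            by_cases h : a = i
            · rw [h, Function.update_self]; exact hn4 l b hlen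
            · rw [Function.update_of_ne h]; exact p5 a (by omega) l b hlen
          · intro a ha l hl hlen
            by_cases h : a = i
            · rw [h, Function.update_self]; exact hn5 l hl hlen
            · rw [Function.update_of_ne h]; exact p6 a (by omega) l hl hlen
          · intro a ha a' ha' hne' l hl l' hl'
            by_cases h : a = i
            · by_cases h' : a' = i
              · omega
              · rw [h, Function.update_self, Function.update_of_ne h']
                intro heq
                exact (hn2 l hl).2 (heq ▸ himg a' (by omega) l' hl')
            · by_cases h' : a' = i
              · rw [h', Function.update_self, Function.update_of_ne h]
                intro heq
                exact (hn2 l' hl').2 (heq.symm ▸ himg a (by omega) l hl)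
              · rw [Function.update_of_ne h, Function.update_of_ne h']
                exact p7 a (by omega) a' (by omega) hne' l hl l' hl'
      obtain ⟨u, ψ, p1, p2, p3, p4, p5, p6, p7⟩ := grow ℓ le_rfl
      refine ⟨fun l => match l with | [] => v | b :: t => ψ (b : Fin ℓ).1 t, rfl, ?_, ?_, ?_, ?_⟩
      · intro l hl
        match l with
        | [] => exact ⟨hvX, hvF⟩
        | b :: t =>
          have ht : t ∈ allLists ℓ j := by
            rw [mem_allLists] at hl ⊢
            simpa using hl
          exact ⟨(p3 b.1 b.2 t ht).1, (p3 b.1 b.2 t ht).2.1⟩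
      · intro l1 h1 l2 h2 heq
        rw [Finset.mem_coe] at h1 h2
        match l1, l2 with
        | [], [] => rfl
        | [], b :: t =>
          have ht : t ∈ allLists ℓ j := by
            rw [mem_allLists] at h2 ⊢
            simpa using h2
          exact absurd heq.symm (p3 b.1 b.2 t ht).2.2
        | b :: t, [] =>
          have ht : t ∈ allLists ℓ j := by
            rw [mem_allLists] at h1 ⊢
            simpa using h1
          exact absurd heq (p3 b.1 b.2 t ht).2.2
        | b :: t, b' :: t' =>
          have ht : t ∈ allLists ℓ j := by
            rw [mem_allLists] at h1 ⊢
            simpa using h1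
          have ht' : t' ∈ allLists ℓ j := by
            rw [mem_allLists] at h2 ⊢
            simpa using h2
          by_cases hbb : b = b'
          · subst hbb
            have := p4 b.1 b.2 (Finset.mem_coe.2 ht) (Finset.mem_coe.2 ht') heq
            rw [this]
          · exfalso
            have hbb' : b.1 ≠ b'.1 := fun hc => hbb (Fin.ext hc)
            exact p7 b.1 b.2 b'.1 b'.2 hbb' t ht t' ht' heq
      · intro l b hlen
        match l with
        | [] =>
          show G v (ψ b.1 [])
          rw [p2 b.1 b.2]
          exact p1 b.1 b.2
        | c :: t =>
          show G (ψ c.1 t) (ψ c.1 (t ++ [b]))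
          exact p5 c.1 c.2 t b (by simpa using hlen)
      · intro l hl hlen
        match l with
        | [] => simp at hlen
        | b :: t =>
          have ht : t ∈ allLists ℓ j := by
            rw [mem_allLists] at hl ⊢
            simpa using hl
          exact p6 b.1 b.2 t ht (by simpa using hlen)
    · -- no such vertex: remove the good set and recurse
      push_neg at hcase
      set X' : Finset W := X.filter (fun u => ¬ GoodV G k ℓ H j X u) with hX'def
      by_cases hX'ne : X'.Nonempty
      · exfalso
        have hdeg' : ∀ v ∈ X', m + rr ℓ k j ≤ odeg G X' v := by
          intro v hv
          have hvX : v ∈ X := Finset.mem_of_mem_filter v hv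
          have hsplit : X.filter (fun u => G v u) ⊆
              (X'.filter (fun u => G v u)) ∪
                (X.filter (fun u => G v u ∧ GoodV G k ℓ H j X u)) := by
            intro x hx
            rw [Finset.mem_filter] at hx
            by_cases hg : GoodV G k ℓ H j X x
            · exact Finset.mem_union_right _ (Finset.mem_filter.2 ⟨hx.1, hx.2, hg⟩)
            · exact Finset.mem_union_left _ (Finset.mem_filter.2
                ⟨Finset.mem_filter.2 ⟨hx.1, hg⟩, hx.2⟩)
          have h1 := Finset.card_le_card hsplit
          have h2 := Finset.card_union_le (X'.filter (fun u => G v u))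
            (X.filter (fun u => G v u ∧ GoodV G k ℓ H j X u))
          have h3 := hcase v hvX
          have h4 := hdeg v hvX
          have h5 := rr_succ ℓ k j
          simp only [odeg] at h4 ⊢
          omega
        obtain ⟨w, hw⟩ := ih (by omega) X' hX'ne hdeg'
        have hw' : w ∈ X' := hw.1
        rw [hX'def, Finset.mem_filter] at hw'
        exact hw'.2 (GoodV.mono G (Finset.filter_subset _ _) hw)
      · -- X' empty: every vertex of X is good
        have hall : ∀ u ∈ X, GoodV G k ℓ H j X u := by
          intro u hu
          by_contra hcon
          exact hX'ne ⟨u, Finset.mem_filter.2 ⟨hu, hcon⟩⟩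
        obtain ⟨v, hv⟩ := hne
        exfalso
        have heqf : X.filter (fun u => G v u ∧ GoodV G k ℓ H j X u)
            = X.filter (fun u => G v u) := by
          apply Finset.filter_congr
          intro x hx
          simp only [and_iff_left_iff_imp]
          exact fun _ => hall x hx
        have h4 := hdeg v hv
        have h5 := rr_succ ℓ k j
        have h6 := hcase v hv
        rw [heqf] at h6
        simp only [odeg] at h4
        omega


lemma legs_greedy (k ℓ H : ℕ) (hk : 1 ≤ k) (hℓ : 2 ≤ ℓ) (hH : H = 3*k*ℓ^(k+1))
    (ψ : List (Fin ℓ) → W)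
    (hcent : ∀ l ∈ (allLists ℓ k).filter (fun l => l.length = k),
      IsCentre G k H Finset.univ (ψ l)) :
    ∀ T : Finset (List (Fin ℓ)), T ⊆ (allLists ℓ k).filter (fun l => l.length = k) →
    ∃ sel : List (Fin ℓ) → Fin ℓ → Fin k → W,
      ∀ l ∈ T,
        (∀ (r : Fin ℓ) (p p' : Fin k), (p:ℕ) = (p':ℕ)+1 → G (sel l r p) (sel l r p')) ∧
        (∀ (r : Fin ℓ) (p : Fin k), (p:ℕ) = 0 → G (sel l r p) (ψ l)) ∧
        (Function.Injective fun rp : Fin ℓ × Fin k => sel l rp.1 rp.2) ∧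
        (∀ r p, sel l r p ∉ (allLists ℓ k).image ψ) ∧
        (∀ l' ∈ T, l ≠ l' → ∀ r p r' p', sel l r p ≠ sel l' r' p') := by
  intro T
  induction T using Finset.induction_on with
  | empty =>
    intro _
    exact ⟨fun _ _ _ => ψ [], by simp⟩
  | @insert l T hlT ihT =>
    intro hsub
    have hTsub : T ⊆ (allLists ℓ k).filter (fun l => l.length = k) :=
      fun x hx => hsub (Finset.mem_insert_of_mem hx)
    have hlE : l ∈ (allLists ℓ k).filter (fun l => l.length = k) :=
      hsub (Finset.mem_insert_self _ _)
    obtain ⟨sel, hsel⟩ := ihT hTsub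
    -- forbidden set
    set U : Finset W := ((allLists ℓ k).image ψ) ∪ T.biUnion
      (fun l' => Finset.univ.image (fun rp : Fin ℓ × Fin k => sel l' rp.1 rp.2)) with hUdef
    have hUcard : U.card + ℓ ≤ H := by
      have h1 : ((allLists ℓ k).image ψ).card ≤ (allLists ℓ k).card := Finset.card_image_le
      have h2 : (allLists ℓ k).card + 1 ≤ 2 * ℓ ^ k := card_allLists_le ℓ k hℓ
      have h3 : T.card + 1 ≤ ℓ ^ k := by
        have hTcard : T.card < ((allLists ℓ k).filter (fun l => l.length = k)).card := by
          apply Finset.card_lt_card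
          exact ⟨hTsub, fun hcon => hlT (hcon hlE)⟩
        have := card_exact_le ℓ k
        omega
      have h4 : (T.biUnion (fun l' => Finset.univ.image
          (fun rp : Fin ℓ × Fin k => sel l' rp.1 rp.2))).card ≤ T.card * (ℓ * k) := by
        apply le_trans Finset.card_biUnion_le
        calc ∑ l' ∈ T, (Finset.univ.image (fun rp : Fin ℓ × Fin k => sel l' rp.1 rp.2)).card
            ≤ ∑ _l' ∈ T, (ℓ * k) := by
              apply Finset.sum_le_sum
              intro l' _
              apply le_trans Finset.card_image_le
              simp [Fintype.card_prod]
          _ = T.card * (ℓ * k) := by rw [Finset.sum_const, smul_eq_mul]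
      have h5 : U.card ≤ ((allLists ℓ k).image ψ).card + (T.biUnion (fun l' =>
          Finset.univ.image (fun rp : Fin ℓ × Fin k => sel l' rp.1 rp.2))).card :=
        Finset.card_union_le _ _
      have h6 : (T.card + 1) * (ℓ * k) ≤ ℓ ^ k * (ℓ * k) := Nat.mul_le_mul_right _ h3
      have h7 : ℓ ^ k * (ℓ * k) = k * ℓ ^ (k+1) := by rw [pow_succ]; ring
      have h8 : 2 * ℓ ^ k + ℓ ≤ 2 * k * ℓ ^ (k+1) := arith_final k ℓ hk hℓ
      have h9 : T.card * (ℓ * k) + (ℓ * k) = (T.card + 1) * (ℓ * k) := by ring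
      have h10 : 2 * k * ℓ ^ (k+1) + k * ℓ ^ (k+1) = 3 * k * ℓ ^ (k+1) := by ring
      omega
    obtain ⟨hclX, leg, hleg1, hleg2, hleg3, hleg4, hleg5⟩ := hcent l hlE
    obtain ⟨e, heinj, heavoid⟩ := choose_rays hk leg hleg2 U hUcard
    refine ⟨Function.update sel l (fun r p => leg (e r) p), ?_⟩
    intro l'' hl''
    rw [Finset.mem_insert] at hl''
    rcases hl'' with rfl | hl''T
    · rw [Function.update_self]
      refine ⟨?_, ?_, ?_, ?_, ?_⟩
      · intro r p p' hp
        exact hleg5 (e r) p p' hp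
      · intro r p hp
        exact hleg4 (e r) p hp
      · intro rp rp' heq
        obtain ⟨r, p⟩ := rp
        obtain ⟨r', p'⟩ := rp'
        have h2 : (fun rp : Fin H × Fin k => leg rp.1 rp.2) (e r, p)
            = (fun rp : Fin H × Fin k => leg rp.1 rp.2) (e r', p') := heq
        have h3 := hleg2 h2
        have h4 : e r = e r' := congrArg Prod.fst h3
        have h5 : p = p' := congrArg Prod.snd h3
        rw [heinj h4, h5]
      · intro r p hmem
        exact heavoid r p (Finset.mem_union_left _ hmem)
      · intro l' hl' hne' r p r' p'
        rcases Finset.mem_insert.1 hl' with rfl | hl'T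
        · exact absurd rfl hne'
        · rw [Function.update_of_ne (by rintro rfl; exact hlT hl'T)]
          intro heq
          apply heavoid r p
          apply Finset.mem_union_right
          rw [heq]
          exact Finset.mem_biUnion.2 ⟨l', hl'T,
            Finset.mem_image.2 ⟨(r', p'), Finset.mem_univ _, rfl⟩⟩
    · rw [Function.update_of_ne (by rintro rfl; exact hlT hl''T)]
      obtain ⟨c1, c2, c3, c4, c5⟩ := hsel l'' hl''T
      refine ⟨c1, c2, c3, c4, ?_⟩
      intro l' hl' hne' r p r' p'
      rcases Finset.mem_insert.1 hl' with rfl | hl'T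
      · rw [Function.update_self]
        intro heq
        apply heavoid r' p'
        apply Finset.mem_union_right
        rw [← heq]
        exact Finset.mem_biUnion.2 ⟨l'', hl''T,
          Finset.mem_image.2 ⟨(r, p), Finset.mem_univ _, rfl⟩⟩
      · rw [Function.update_of_ne (by rintro rfl; exact hlT hl'T)]
        exact c5 l' hl'T hne' r p r' p'

end S

/-- If `f` is such that every digraph of minimum out-degree at least `f(k, h)` contains
`S⁻_{k,h}`, then every digraph of minimum out-degree at least
`f(k, 3kℓ^(k+1)) + 2kℓ^k` contains `T(k,ℓ)` (`k ≥ 1`, `ℓ ≥ 2`). -/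
theorem stmt12 (k ℓ : ℕ) (hk : 1 ≤ k) (hℓ : 2 ≤ ℓ) (f : ℕ → ℕ → ℕ)
    (hf : ∀ (k' h : ℕ) (W : Type) (_ : Finite W) (_ : Nonempty W) (G : W → W → Prop),
      Loopless G → (∀ v, f k' h ≤ outDeg G v) → ContainsSub (SpiderAdj k' h) G)
    {W : Type} [Finite W] [Nonempty W] (G : W → W → Prop) (hG : Loopless G)
    (hdeg : ∀ v, f k (3 * k * ℓ ^ (k + 1)) + 2 * k * ℓ ^ k ≤ outDeg G v) :
    ContainsSub (TAdj k ℓ) G := by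
  classical
  haveI : Fintype W := Fintype.ofFinite W
  set H : ℕ := 3 * k * ℓ ^ (k + 1) with hHdef
  set m : ℕ := f k H with hmdef
  -- the spider oracle in induced subgraphs
  have hcent : ∀ X : Finset W, X.Nonempty → (∀ v ∈ X, m ≤ odeg G X v) →
      ∃ c, IsCentre G k H X c := by
    intro X hne hdeg'
    haveI : Nonempty {x // x ∈ X} := Finset.nonempty_coe_sort.2 hne
    apply exists_centre G k H X hne
    apply hf k H {x // x ∈ X} inferInstance inferInstance
    · exact fun a => hG a.1
    · intro v
      rw [outDeg_restrict]
      exact hdeg' v.1 v.2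
  have hdegV : ∀ v ∈ (Finset.univ : Finset W), m + rr ℓ k k ≤ odeg G Finset.univ v := by
    intro v _
    have h1 := hdeg v
    rw [outDeg_eq_odeg] at h1
    have h2 := rr_le ℓ k hℓ
    omega
  obtain ⟨v, hv⟩ := main_lemma G k ℓ H m hk hℓ hcent k le_rfl Finset.univ
    Finset.univ_nonempty hdegV
  obtain ⟨ψ, hψ1, hψ2, hψ3, hψ4, hψ5⟩ := hv.2 ∅ (Nat.zero_le _ |>.trans_eq' (by simp)) (by simp)
  -- choose the legs at the leaves
  have hcent' : ∀ l ∈ (allLists ℓ k).filter (fun l => l.length = k),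
      IsCentre G k H Finset.univ (ψ l) := by
    intro l hl
    rw [Finset.mem_filter] at hl
    exact hψ5 l hl.1 hl.2
  obtain ⟨sel, hsel⟩ := legs_greedy G k ℓ H hk hℓ hHdef ψ hcent'
    ((allLists ℓ k).filter (fun l => l.length = k)) Finset.Subset.rfl
  -- membership helpers
  have hmemE : ∀ l : {l : List (Fin ℓ) // l.length = k},
      l.1 ∈ (allLists ℓ k).filter (fun l => l.length = k) := by
    intro l
    exact Finset.mem_filter.2 ⟨(mem_allLists ℓ k l.1).2 (le_of_eq l.2), l.2⟩
  have hmemS : ∀ l : {l : List (Fin ℓ) // l.length ≤ k}, l.1 ∈ allLists ℓ k :=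
    fun l => (mem_allLists ℓ k l.1).2 l.2
  -- the embedding
  refine ⟨fun x => match x with
    | Sum.inl u => ψ u.1
    | Sum.inr (l, r, p) => sel l.1 r p, ?_, ?_⟩
  · -- injectivity
    intro x y hxy
    match x, y with
    | Sum.inl u, Sum.inl u' =>
      have : u.1 = u'.1 := hψ3 (Finset.mem_coe.2 (hmemS u)) (Finset.mem_coe.2 (hmemS u')) hxy
      exact congrArg Sum.inl (Subtype.ext this)
    | Sum.inl u, Sum.inr (l, r, p) =>
      exfalso
      have hxy' : ψ u.1 = sel l.1 r p := hxy
      apply (hsel l.1 (hmemE l)).2.2.2.1 r p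
      rw [← hxy']
      exact Finset.mem_image_of_mem ψ (hmemS u)
    | Sum.inr (l, r, p), Sum.inl u =>
      exfalso
      have hxy' : sel l.1 r p = ψ u.1 := hxy
      apply (hsel l.1 (hmemE l)).2.2.2.1 r p
      rw [hxy']
      exact Finset.mem_image_of_mem ψ (hmemS u)
    | Sum.inr (l, r, p), Sum.inr (l', r', p') =>
      by_cases hll : l.1 = l'.1
      · have hls : l = l' := Subtype.ext hll
        subst hls
        have h2 : (fun rp : Fin ℓ × Fin k => sel l.1 rp.1 rp.2) (r, p)
            = (fun rp : Fin ℓ × Fin k => sel l.1 rp.1 rp.2) (r', p') := hxy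
        have h3 := (hsel l.1 (hmemE l)).2.2.1 h2
        have h4 : r = r' := congrArg Prod.fst h3
        have h5 : p = p' := congrArg Prod.snd h3
        rw [h4, h5]
      · exact absurd hxy ((hsel l.1 (hmemE l)).2.2.2.2 l'.1 (hmemE l') hll r p r' p')
  · -- adjacency
    intro x y hxy
    match x, y with
    | Sum.inl u, Sum.inl u' =>
      obtain ⟨a, ha⟩ := hxy
      have hlen : u.1.length < k := by
        have := u'.2
        rw [ha] at this
        simp at this
        omega
      show G (ψ u.1) (ψ u'.1)
      rw [ha]
      exact hψ4 u.1 a hlen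
    | Sum.inl u, Sum.inr _ => exact absurd hxy (by simp [TAdj])
    | Sum.inr (l, r, p), Sum.inl u' =>
      obtain ⟨hp, hu⟩ := hxy
      show G (sel l.1 r p) (ψ u'.1)
      rw [hu]
      exact (hsel l.1 (hmemE l)).2.1 r p hp
    | Sum.inr (l, r, p), Sum.inr (l', r', p') =>
      obtain ⟨hl, hr, hp⟩ := hxy
      subst hl
      subst hr
      exact (hsel l.1 (hmemE l)).1 r p p' hp
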